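/- Let S ⊆ lim(ω₁) be stationary and suppose every ladder system on S satisfies 2-uniformization (respectively ℵ₀-uniformization). If E ⊆ {δ + n : δ ∈ S, n ∈ ω} and every ladder system considered on E has the property that ladders at δ + n and δ + m have disjoint ranges for n ≠ m, then every such ladder system on E satisfies 2-uniformization (respectively ℵ₀-uniformization). -/

import Mathlib

open Ordinal Set

noncomputable def omega1 : Ordinal := (Cardinal.aleph 1).ord

def IsLadderOn (δ : Ordinal) (η : ℕ → Ordinal) : Prop :=
  StrictMono η ∧ (∀ n, η n < δ) ∧ ∀ β < δ, ∃ n, β ≤ η n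

def IsLadderAt (α : Ordinal) (η : ℕ → Ordinal) : Prop :=
  ∃ (δ : Ordinal) (n : ℕ), (δ ≠ 0 ∧ ∀ a < δ, Order.succ a < δ) ∧ α = δ + n ∧ IsLadderOn δ η

def IsClubOrd (C : Set Ordinal) : Prop :=
  C ⊆ Set.Iio omega1 ∧
  (∀ α < omega1, ∃ β ∈ C, α < β) ∧
  (∀ δ < omega1, (δ ≠ 0 ∧ ∀ a < δ, Order.succ a < δ) → (∀ α < δ, ∃ β ∈ C, α < β ∧ β < δ) → δ ∈ C)

def IsStat (S : Set Ordinal) : Prop := ∀ C, IsClubOrd C → (S ∩ C).Nonempty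

def UnifBelow (S : Set Ordinal) (η : Ordinal → ℕ → Ordinal) (h : Ordinal → ℕ → ℕ) : Prop :=
  ∀ c : Ordinal → ℕ → ℕ, (∀ α ∈ S, ∀ n, c α n < h α n) →
    ∃ (f : Ordinal → ℕ) (fs : Ordinal → ℕ), ∀ α ∈ S, ∀ n, fs α ≤ n → f (η α n) = c α n

def LambdaUnif (S : Set Ordinal) (η : Ordinal → ℕ → Ordinal) (l : ℕ) : Prop :=
  UnifBelow S η (fun _ _ => l)

def OmegaUnif (S : Set Ordinal) (η : Ordinal → ℕ → Ordinal) : Prop :=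
  ∀ c : Ordinal → ℕ → ℕ,
    ∃ (f : Ordinal → ℕ) (fs : Ordinal → ℕ), ∀ α ∈ S, ∀ n, fs α ≤ n → f (η α n) = c α n

def TreeLike (S : Set Ordinal) (η : Ordinal → ℕ → Ordinal) : Prop :=
  ∀ α ∈ S, ∀ β ∈ S, ∀ n m, η α n = η β m → n = m ∧ ∀ k ≤ n, η α k = η β k

def StronglyTreeLike (S : Set Ordinal) (η : Ordinal → ℕ → Ordinal) (F : Ordinal → ℕ) : Prop :=
  TreeLike S η ∧ ∀ α ∈ S, ∀ β ∈ S, ∀ n m, η α n = η β m → F α = F β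
lemma aux_add_nat_lt {δ β : Ordinal} (h : (δ ≠ 0 ∧ ∀ a < δ, Order.succ a < δ)) (hβ : β < δ) (n : ℕ) :
    β + (n : Ordinal) < δ := by
  induction n with
  | zero => simpa
  | succ n ih =>
      have : (β + n) + 1 < δ := by
        have := h.2 _ ih
        simpa [Order.succ] using this
      rwa [Nat.cast_succ, ← add_assoc]

lemma aux_unique {δ δ' : Ordinal} {n m : ℕ} (h : (δ ≠ 0 ∧ ∀ a < δ, Order.succ a < δ)) (h' : (δ' ≠ 0 ∧ ∀ a < δ', Order.succ a < δ'))
    (heq : δ + (n : Ordinal) = δ' + (m : Ordinal)) : δ = δ' ∧ n = m := by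
  have hdd : δ = δ' := by
    rcases lt_trichotomy δ δ' with hlt | he | hlt
    · have h1 : δ + (n:Ordinal) < δ' := aux_add_nat_lt h' hlt n
      have h2 : δ' ≤ δ' + (m:Ordinal) := le_self_add
      exact absurd heq (by intro e; rw [e] at h1; exact absurd (lt_of_lt_of_le h1 h2) (lt_irrefl _))
    · exact he
    · have h1 : δ' + (m:Ordinal) < δ := aux_add_nat_lt h hlt m
      have h2 : δ ≤ δ + (n:Ordinal) := le_self_add
      exact absurd heq.symm (by intro e; rw [e] at h1; exact absurd (lt_of_lt_of_le h1 h2) (lt_irrefl _))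
  subst hdd
  exact ⟨rfl, Nat.cast_inj.mp ((add_right_inj δ).mp heq)⟩

lemma aux_exists_ladder (δ : Ordinal) (h1 : δ < omega1) (h2 : (δ ≠ 0 ∧ ∀ a < δ, Order.succ a < δ)) :
    ∃ e : ℕ → Ordinal, IsLadderOn δ e := by
  have hc : (Set.Iio δ).Countable := by
    rw [omega1, Cardinal.lt_ord] at h1
    rw [Cardinal.countable_iff_lt_aleph_one, Ordinal.mk_Iio_ordinal]
    exact Cardinal.lift_lt_aleph_one.mpr h1
  have hne : (Set.Iio δ).Nonempty := ⟨0, (pos_iff_ne_zero.mpr h2.1)⟩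
  obtain ⟨g, hg⟩ := hc.exists_eq_range hne
  have hglt : ∀ n, g n < δ := fun n => by
    have : g n ∈ Set.Iio δ := hg ▸ Set.mem_range_self n
    exact this
  refine ⟨fun n => (Finset.range (n+1)).sup g + (n : Ordinal), ?_, ?_, ?_⟩
  · apply strictMono_nat_of_lt_succ
    intro n
    have hsup : (Finset.range (n+1)).sup g ≤ (Finset.range (n+2)).sup g :=
      Finset.sup_mono (by intro x hx; simp at hx ⊢; omega)
    calc (Finset.range (n+1)).sup g + (n:Ordinal)
        ≤ (Finset.range (n+2)).sup g + (n:Ordinal) := by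
          exact add_le_add_left hsup _
      _ < (Finset.range (n+2)).sup g + ((n+1 : ℕ):Ordinal) := by
          apply add_lt_add_right; exact_mod_cast Nat.lt_succ_self n
  · intro n
    have hsup : (Finset.range (n+1)).sup g < δ := by
      apply Finset.sup_lt_iff (by simpa using (pos_iff_ne_zero.mpr h2.1)) |>.mpr
      intro i _; exact hglt i
    exact aux_add_nat_lt h2 hsup n
  · intro β hβ
    have : β ∈ Set.range g := by rw [← hg]; exact hβ
    obtain ⟨n, rfl⟩ := this
    refine ⟨n, le_trans ?_ (le_self_add)⟩
    exact Finset.le_sup (by simp)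

lemma aux_enum (U : Set Ordinal) (hinf : U.Infinite)
    (hfin : ∀ β ∈ U, {u ∈ U | u ≤ β}.Finite) :
    ∃ e : ℕ → Ordinal, StrictMono e ∧ Set.range e = U := by
  classical
  have hnext : ∀ β ∈ U, ∃ u ∈ U, β < u := by
    intro β hβ
    by_contra h; push_neg at h
    have : U ⊆ {u ∈ U | u ≤ β} := fun u hu => ⟨hu, h u hu⟩
    exact hinf ((hfin β hβ).subset this)
  set e : ℕ → Ordinal := fun k => Nat.rec (sInf U) (fun _ prev => sInf {u ∈ U | prev < u}) k with he
  have hmem : ∀ k, e k ∈ U ∧ e k < e (k+1) := by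
    intro k
    induction k with
    | zero =>
        have h0 : e 0 ∈ U := csInf_mem hinf.nonempty
        have hne : {u ∈ U | e 0 < u}.Nonempty := by
          obtain ⟨u, hu, hlt⟩ := hnext _ h0; exact ⟨u, hu, hlt⟩
        have h1 : e 1 ∈ {u ∈ U | e 0 < u} := csInf_mem hne
        exact ⟨h0, h1.2⟩
    | succ k ih =>
        have hk1 : e (k+1) ∈ {u ∈ U | e k < u} := by
          have hne : {u ∈ U | e k < u}.Nonempty := by
            obtain ⟨u, hu, hlt⟩ := hnext _ ih.1; exact ⟨u, hu, hlt⟩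
          exact csInf_mem hne
        have hne2 : {u ∈ U | e (k+1) < u}.Nonempty := by
          obtain ⟨u, hu, hlt⟩ := hnext _ hk1.1; exact ⟨u, hu, hlt⟩
        have h2 : e (k+2) ∈ {u ∈ U | e (k+1) < u} := csInf_mem hne2
        exact ⟨hk1.1, h2.2⟩
  have hsm : StrictMono e := strictMono_nat_of_lt_succ (fun k => (hmem k).2)
  refine ⟨e, hsm, Set.Subset.antisymm ?_ ?_⟩
  · rintro _ ⟨k, rfl⟩; exact (hmem k).1
  · intro γ hγ
    by_contra hne
    have hlt : ∀ k, e k < γ := by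
      intro k
      induction k with
      | zero =>
          have hle : e 0 ≤ γ := csInf_le' hγ
          exact lt_of_le_of_ne hle (fun h => hne ⟨0, h⟩)
      | succ k ih =>
          have hmemγ : γ ∈ {u ∈ U | e k < u} := ⟨hγ, ih⟩
          have hle : e (k+1) ≤ γ := csInf_le' hmemγ
          exact lt_of_le_of_ne hle (fun h => hne ⟨k+1, h⟩)
    have : {u ∈ U | u ≤ γ}.Infinite :=
      Set.infinite_of_injective_forall_mem (f := e) hsm.injective
        (fun k => ⟨(hmem k).1, (hlt k).le⟩)
    exact this (hfin γ hγ)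

lemma aux_per_delta (δ : Ordinal) (hδ1 : δ < omega1) (hδ2 : (δ ≠ 0 ∧ ∀ a < δ, Order.succ a < δ))
    (E : Set Ordinal) (η : Ordinal → ℕ → Ordinal)
    (hlad : ∀ n : ℕ, (δ + (n : Ordinal)) ∈ E → IsLadderOn δ (η (δ + n)))
    (hdisj : ∀ n m : ℕ, (δ + (n : Ordinal)) ∈ E → (δ + (m : Ordinal)) ∈ E → n ≠ m →
      Disjoint (Set.range (η (δ + n))) (Set.range (η (δ + m)))) :
    ∃ (ζ : ℕ → Ordinal) (d : ℕ → ℕ × ℕ),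
      IsLadderOn δ ζ ∧
      ((∃ n : ℕ, (δ + (n : Ordinal)) ∈ E) →
        ∀ k, (δ + ((d k).1 : Ordinal)) ∈ E ∧ ζ k = η (δ + (d k).1) (d k).2) ∧
      (∀ n : ℕ, (δ + (n : Ordinal)) ∈ E → ∀ K : ℕ, ∃ M : ℕ, ∀ m, M ≤ m →
        ∃ k, K ≤ k ∧ ζ k = η (δ + n) m ∧ d k = (n, m)) := by
  classical
  by_cases hgood : ∃ n : ℕ, (δ + (n : Ordinal)) ∈ E
  case neg =>
    obtain ⟨e, he⟩ := aux_exists_ladder δ hδ1 hδ2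
    exact ⟨e, fun _ => (0, 0), he, fun h => absurd h hgood,
      fun n hn => absurd ⟨n, hn⟩ hgood⟩
  case pos =>
  obtain ⟨n₀, hn₀⟩ := hgood
  set b : ℕ → Ordinal := η (δ + n₀) with hb
  have hbl : IsLadderOn δ b := hlad n₀ hn₀
  -- tail starts
  have hstart : ∀ n : ℕ, ∃ t : ℕ, (δ + (n : Ordinal)) ∈ E → b n < η (δ + n) t := by
    intro n
    by_cases hn : (δ + (n : Ordinal)) ∈ E
    · have hbn : b n + 1 < δ := by
        have := hbl.2.1 n
        simpa [Order.succ] using hδ2.2 _ this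
      obtain ⟨t, ht⟩ := (hlad n hn).2.2 (b n + 1) hbn
      exact ⟨t, fun _ => lt_of_lt_of_le (lt_add_one _) ht⟩
    · exact ⟨0, fun h => absurd h hn⟩
  choose t ht using hstart
  set U : Set Ordinal :=
    {γ | ∃ p : ℕ × ℕ, (δ + (p.1 : Ordinal)) ∈ E ∧ t p.1 ≤ p.2 ∧ γ = η (δ + p.1) p.2} with hU
  have hUsub : U ⊆ Set.Iio δ := by
    rintro γ ⟨⟨n, m⟩, hnE, _, rfl⟩
    exact (hlad n hnE).2.1 m
  have hUinf : U.Infinite := by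
    have hinj : Function.Injective (fun m : ℕ => η (δ + n₀) (t n₀ + m)) := by
      intro a a' haa
      have := (hlad n₀ hn₀).1.injective haa
      omega
    exact Set.infinite_of_injective_forall_mem hinj
      (fun m => ⟨(n₀, t n₀ + m), hn₀, Nat.le_add_right _ _, rfl⟩)
  have hUfin : ∀ γ ∈ U, {u ∈ U | u ≤ γ}.Finite := by
    intro γ hγ
    have hγδ : γ < δ := hUsub hγ
    -- bound on n
    obtain ⟨N, hN⟩ : ∃ N, γ < b N := by
      have : γ + 1 < δ := by simpa [Order.succ] using hδ2.2 _ hγδ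
      obtain ⟨N, hN⟩ := hbl.2.2 (γ + 1) this
      exact ⟨N, lt_of_lt_of_le (lt_add_one _) hN⟩
    -- bound on m per n
    have hMn : ∀ n : ℕ, ∃ M : ℕ, (δ + (n : Ordinal)) ∈ E → ∀ m, M ≤ m → γ < η (δ + n) m := by
      intro n
      by_cases hn : (δ + (n : Ordinal)) ∈ E
      · have : γ + 1 < δ := by simpa [Order.succ] using hδ2.2 _ hγδ
        obtain ⟨M, hM⟩ := (hlad n hn).2.2 (γ + 1) this
        refine ⟨M, fun _ m hm => ?_⟩
        calc γ < γ + 1 := lt_add_one _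
          _ ≤ η (δ + n) M := hM
          _ ≤ η (δ + n) m := (hlad n hn).1.monotone hm
      · exact ⟨0, fun h => absurd h hn⟩
    choose M hM using hMn
    have hsub : {u ∈ U | u ≤ γ} ⊆
        ⋃ n ∈ Finset.range N, η (δ + n) '' (Set.Iio (M n)) := by
      rintro u ⟨⟨⟨n, m⟩, hnE, htm, rfl⟩, hle⟩
      have hnN : n < N := by
        by_contra hge
        push_neg at hge
        have h1 : b N ≤ b n := hbl.1.monotone hge
        have h2 : b n < η (δ + n) m :=
          lt_of_lt_of_le (ht n hnE) ((hlad n hnE).1.monotone htm)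
        exact absurd hle (not_le.mpr ((hN.trans_le h1).trans h2))
      have hmM : m < M n := by
        by_contra hge
        push_neg at hge
        exact absurd hle (not_le.mpr (hM n hnE m hge))
      exact Set.mem_biUnion (Finset.mem_range.mpr hnN) ⟨m, hmM, rfl⟩
    refine Set.Finite.subset ?_ hsub
    apply Set.Finite.biUnion (Finset.range N).finite_toSet
    intro n _
    exact (Set.finite_Iio (M n)).image _
  obtain ⟨ζ, hζsm, hζrange⟩ := aux_enum U hUinf hUfin
  have hdec : ∀ k, ∃ p : ℕ × ℕ, (δ + (p.1 : Ordinal)) ∈ E ∧ t p.1 ≤ p.2 ∧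
      ζ k = η (δ + p.1) p.2 := by
    intro k
    have : ζ k ∈ U := hζrange ▸ Set.mem_range_self k
    exact this
  choose d hd1 hd2 hd3 using hdec
  refine ⟨ζ, d, ⟨hζsm, ?_, ?_⟩, fun _ k => ⟨hd1 k, hd3 k⟩, ?_⟩
  · intro k; exact hUsub (hζrange ▸ Set.mem_range_self k)
  · -- cofinal
    intro β hβ
    obtain ⟨m, hm⟩ := hbl.2.2 β hβ
    have hmem : η (δ + n₀) (max m (t n₀)) ∈ U :=
      ⟨(n₀, max m (t n₀)), hn₀, le_max_right _ _, rfl⟩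
    rw [← hζrange] at hmem
    obtain ⟨k, hk⟩ := hmem
    exact ⟨k, hk ▸ le_trans hm (hbl.1.monotone (le_max_left _ _))⟩
  · -- main clause
    intro n hn K
    have hζK : ζ K < δ := hUsub (hζrange ▸ Set.mem_range_self K)
    obtain ⟨m₁, hm₁⟩ := (hlad n hn).2.2 (ζ K) hζK
    refine ⟨max m₁ (t n), fun m hm => ?_⟩
    have hmem : η (δ + n) m ∈ U := ⟨(n, m), hn, le_trans (le_max_right _ _) hm, rfl⟩
    rw [← hζrange] at hmem
    obtain ⟨k, hk⟩ := hmem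
    have hKk : K ≤ k := by
      have h1 : ζ K ≤ ζ k := by
        rw [hk]
        exact le_trans hm₁ ((hlad n hn).1.monotone (le_trans (le_max_left _ _) hm))
      exact hζsm.le_iff_le.mp h1
    have heq : η (δ + ((d k).1 : ℕ)) (d k).2 = η (δ + n) m := by
      rw [← hd3 k, hk]
    have hn1 : (d k).1 = n := by
      by_contra hne
      exact Set.disjoint_left.mp (hdisj (d k).1 n (hd1 k) hn hne)
        ⟨(d k).2, rfl⟩ ⟨m, heq.symm ▸ rfl⟩
    rw [hn1] at heq
    have hm2 : (d k).2 = m := (hlad n hn).1.injective heq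
    exact ⟨k, hKk, hk, Prod.ext hn1 hm2⟩

lemma aux_key (S : Set Ordinal) (hS : ∀ δ ∈ S, δ < omega1 ∧ (δ ≠ 0 ∧ ∀ a < δ, Order.succ a < δ))
    (E : Set Ordinal) (hE : ∀ α ∈ E, ∃ δ ∈ S, ∃ n : ℕ, α = δ + n)
    (η : Ordinal → ℕ → Ordinal) (hlad : ∀ α ∈ E, IsLadderAt α (η α))
    (hdisj : ∀ δ ∈ S, ∀ n m : ℕ, (δ + n : Ordinal) ∈ E → (δ + m : Ordinal) ∈ E → n ≠ m →
      Disjoint (Set.range (η (δ + n))) (Set.range (η (δ + m))))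
    (c : Ordinal → ℕ → ℕ)
    (H : ∀ ζs : Ordinal → ℕ → Ordinal, (∀ δ ∈ S, IsLadderOn δ (ζs δ)) →
      ∀ c' : Ordinal → ℕ → ℕ,
        (∀ δ ∈ S, ∀ k, c' δ k = 0 ∨ ∃ α ∈ E, ∃ m, c' δ k = c α m) →
        ∃ (f : Ordinal → ℕ) (fs : Ordinal → ℕ),
          ∀ δ ∈ S, ∀ k, fs δ ≤ k → f (ζs δ k) = c' δ k) :
    ∃ (f : Ordinal → ℕ) (fs : Ordinal → ℕ),
      ∀ α ∈ E, ∀ m, fs α ≤ m → f (η α m) = c α m := by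
  classical
  -- ladders on each δ ∈ S
  have hladS : ∀ δ ∈ S, ∀ n : ℕ, (δ + (n : Ordinal)) ∈ E → IsLadderOn δ (η (δ + n)) := by
    intro δ hδ n hn
    obtain ⟨δ', n', hδ', heq, hl⟩ := hlad _ hn
    obtain ⟨h1, -⟩ := aux_unique (hS δ hδ).2 hδ' heq
    rwa [← h1] at hl
  have hper : ∀ δ : Ordinal, ∃ (ζ : ℕ → Ordinal) (d : ℕ → ℕ × ℕ), δ ∈ S →
      IsLadderOn δ ζ ∧
      ((∃ n : ℕ, (δ + (n : Ordinal)) ∈ E) →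
        ∀ k, (δ + ((d k).1 : Ordinal)) ∈ E ∧ ζ k = η (δ + (d k).1) (d k).2) ∧
      (∀ n : ℕ, (δ + (n : Ordinal)) ∈ E → ∀ K : ℕ, ∃ M : ℕ, ∀ m, M ≤ m →
        ∃ k, K ≤ k ∧ ζ k = η (δ + n) m ∧ d k = (n, m)) := by
    intro δ
    by_cases hδ : δ ∈ S
    · obtain ⟨ζ, d, h⟩ := aux_per_delta δ (hS δ hδ).1 (hS δ hδ).2 E η (hladS δ hδ)
        (hdisj δ hδ)
      exact ⟨ζ, d, fun _ => h⟩
    · exact ⟨fun _ => 0, fun _ => (0, 0), fun h => absurd h hδ⟩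
  choose Z D hZ using hper
  have hZlad : ∀ δ ∈ S, IsLadderOn δ (Z δ) := fun δ hδ => (hZ δ hδ).1
  set c' : Ordinal → ℕ → ℕ := fun δ k =>
    if (δ ∈ S ∧ ∃ n : ℕ, (δ + (n : Ordinal)) ∈ E) then
      c (δ + ((D δ k).1 : ℕ)) ((D δ k).2) else 0 with hc'
  have hc'val : ∀ δ ∈ S, ∀ k, c' δ k = 0 ∨ ∃ α ∈ E, ∃ m, c' δ k = c α m := by
    intro δ hδ k
    by_cases hg : ∃ n : ℕ, (δ + (n : Ordinal)) ∈ E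
    · right
      have hcond : δ ∈ S ∧ ∃ n : ℕ, (δ + (n : Ordinal)) ∈ E := ⟨hδ, hg⟩
      refine ⟨δ + ((D δ k).1 : ℕ), ((hZ δ hδ).2.1 hg k).1, (D δ k).2, ?_⟩
      simp only [hc']
      rw [if_pos hcond]
    · left
      simp only [hc']
      rw [if_neg (fun h : _ ∧ _ => hg h.2)]
  obtain ⟨f, fs', hf⟩ := H Z hZlad c' hc'val
  have hfs : ∀ α : Ordinal, ∃ M : ℕ, α ∈ E → ∀ m, M ≤ m → f (η α m) = c α m := by
    intro α
    by_cases hα : α ∈ E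
    · obtain ⟨δ, hδS, n, rfl⟩ := hE α hα
      obtain ⟨M, hM⟩ := (hZ δ hδS).2.2 n hα (fs' δ)
      refine ⟨M, fun _ m hm => ?_⟩
      obtain ⟨k, hKk, hζk, hdk⟩ := hM m hm
      have hfk := hf δ hδS k hKk
      rw [hζk] at hfk
      have hcond : δ ∈ S ∧ ∃ n : ℕ, (δ + (n : Ordinal)) ∈ E := ⟨hδS, n, hα⟩
      rw [hfk, hc']
      simp only [hdk]
      rw [if_pos hcond]
    · exact ⟨0, fun h => absurd h hα⟩
  choose fs hfs using hfs
  exact ⟨f, fs, fun α hα m hm => hfs α hα m hm⟩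

/-- Let `S ⊆ lim(ω₁)` be stationary and `E ⊆ {δ + n : δ ∈ S, n ∈ ω}`.  If every ladder
system on `S` satisfies 2-uniformization (resp. `ℵ₀`-uniformization), then every ladder
system on `E` whose ladders at `δ + n` and `δ + m` (`n ≠ m`) have disjoint ranges
satisfies 2-uniformization (resp. `ℵ₀`-uniformization). -/

theorem stmt10 (S : Set Ordinal) (hS : ∀ δ ∈ S, δ < omega1 ∧ (δ ≠ 0 ∧ ∀ a < δ, Order.succ a < δ))
    (hstat : IsStat S)
    (E : Set Ordinal) (hE : ∀ α ∈ E, ∃ δ ∈ S, ∃ n : ℕ, α = δ + n) :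
    ((∀ ζ : Ordinal → ℕ → Ordinal, (∀ δ ∈ S, IsLadderOn δ (ζ δ)) → LambdaUnif S ζ 2) →
      ∀ η : Ordinal → ℕ → Ordinal, (∀ α ∈ E, IsLadderAt α (η α)) →
        (∀ δ ∈ S, ∀ n m : ℕ, (δ + n : Ordinal) ∈ E → (δ + m : Ordinal) ∈ E → n ≠ m →
          Disjoint (Set.range (η (δ + n))) (Set.range (η (δ + m)))) →
        LambdaUnif E η 2) ∧
    ((∀ ζ : Ordinal → ℕ → Ordinal, (∀ δ ∈ S, IsLadderOn δ (ζ δ)) → OmegaUnif S ζ) →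
      ∀ η : Ordinal → ℕ → Ordinal, (∀ α ∈ E, IsLadderAt α (η α)) →
        (∀ δ ∈ S, ∀ n m : ℕ, (δ + n : Ordinal) ∈ E → (δ + m : Ordinal) ∈ E → n ≠ m →
          Disjoint (Set.range (η (δ + n))) (Set.range (η (δ + m)))) →
        OmegaUnif E η) := by
  constructor
  · intro hyp η hladη hdisjη c hc
    exact aux_key S hS E hE η hladη hdisjη c (fun ζs hζs c' hc' =>
      hyp ζs hζs c' (fun δ hδ k => by
        rcases hc' δ hδ k with h | ⟨α, hα, m, h⟩
        · rw [h]; norm_num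
        · rw [h]; exact hc α hα m))
  · intro hyp η hladη hdisjη c
    exact aux_key S hS E hE η hladη hdisjη c (fun ζs hζs c' _ => hyp ζs hζs c')
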